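/- Let μ̂ be a vector of clique marginal probabilities of some strictly positive distribution q on the finite space 𝒳^T. Then the supremum over θ ∈ ℝ^d of the normalized log-likelihood θᵀμ̂ − A(θ) is finite, and it is attained at θ* if and only if the model marginals E_{θ*}[φ(x)] equal μ̂. -/

import Mathlib

open Real Matrix

lemma jensen_log_exp {α : Type*} [Fintype α] (w g : α → ℝ)
    (hw : ∀ x, 0 ≤ w x) (hw1 : ∑ x, w x = 1) :
    ∑ x, w x * g x ≤ Real.log (∑ x, w x * Real.exp (g x)) := by
  have h := convexOn_exp.map_sum_le (t := Finset.univ) (w := w) (p := g)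
    (fun i _ => hw i) hw1 (fun i _ => Set.mem_univ _)
  simp only [smul_eq_mul] at h
  calc ∑ x, w x * g x = Real.log (Real.exp (∑ x, w x * g x)) := (Real.log_exp _).symm
    _ ≤ _ := Real.log_le_log (Real.exp_pos _) h

lemma dot_sum_smul {α ι : Type*} [Fintype α] [Fintype ι]
    (v : ι → ℝ) (c : α → ℝ) (φ : α → ι → ℝ) :
    v ⬝ᵥ (∑ x : α, c x • φ x) = ∑ x : α, c x * (v ⬝ᵥ φ x) := by
  simp only [dotProduct, Finset.sum_apply, Pi.smul_apply, smul_eq_mul,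
    Finset.mul_sum]
  rw [Finset.sum_comm]
  exact Finset.sum_congr rfl fun x _ => Finset.sum_congr rfl fun i _ => by ring

theorem mle_attained_iff_moment_match
    {T : ℕ} {𝒳 : Type*} [Fintype 𝒳] [Nonempty 𝒳]
    {ι : Type*} [Fintype ι]
    (φ : (Fin T → 𝒳) → (ι → ℝ))
    (q : (Fin T → 𝒳) → ℝ) (hq : ∀ x, 0 < q x)
    (hqsum : ∑ x : Fin T → 𝒳, q x = 1)
    (muHat : ι → ℝ) (hmu : muHat = ∑ x : Fin T → 𝒳, q x • φ x) :
    BddAbove (Set.range (fun θ : ι → ℝ =>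
      θ ⬝ᵥ muHat - Real.log (∑ x : Fin T → 𝒳, exp (θ ⬝ᵥ φ x)))) ∧
    ∀ θs : ι → ℝ,
      (∀ θ : ι → ℝ,
        θ ⬝ᵥ muHat - Real.log (∑ x : Fin T → 𝒳, exp (θ ⬝ᵥ φ x))
          ≤ θs ⬝ᵥ muHat - Real.log (∑ x : Fin T → 𝒳, exp (θs ⬝ᵥ φ x))) ↔
      (∑ x : Fin T → 𝒳,
        exp (θs ⬝ᵥ φ x
          - Real.log (∑ x' : Fin T → 𝒳, exp (θs ⬝ᵥ φ x'))) • φ x) = muHat := by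
  classical
  have hZpos : ∀ θ : ι → ℝ, (0:ℝ) < ∑ x : Fin T → 𝒳, exp (θ ⬝ᵥ φ x) :=
    fun θ => Finset.sum_pos (fun x _ => exp_pos _) Finset.univ_nonempty
  have hdotmu : ∀ v : ι → ℝ, v ⬝ᵥ muHat = ∑ x : Fin T → 𝒳, q x * (v ⬝ᵥ φ x) := by
    intro v; rw [hmu, dot_sum_smul]
  have hqle : ∀ x : Fin T → 𝒳, q x ≤ 1 := by
    intro x
    calc q x ≤ ∑ y : Fin T → 𝒳, q y :=
        Finset.single_le_sum (fun y _ => (hq y).le) (Finset.mem_univ x)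
      _ = 1 := hqsum
  have hbound : ∀ θ : ι → ℝ,
      θ ⬝ᵥ muHat - Real.log (∑ x : Fin T → 𝒳, exp (θ ⬝ᵥ φ x)) ≤ 0 := by
    intro θ
    have h1 : θ ⬝ᵥ muHat ≤ Real.log (∑ x : Fin T → 𝒳, q x * exp (θ ⬝ᵥ φ x)) := by
      rw [hdotmu]
      exact jensen_log_exp q (fun x => θ ⬝ᵥ φ x) (fun x => (hq x).le) hqsum
    have h2 : Real.log (∑ x : Fin T → 𝒳, q x * exp (θ ⬝ᵥ φ x))
        ≤ Real.log (∑ x : Fin T → 𝒳, exp (θ ⬝ᵥ φ x)) := by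
      apply Real.log_le_log
      · exact Finset.sum_pos (fun x _ => mul_pos (hq x) (exp_pos _)) Finset.univ_nonempty
      · exact Finset.sum_le_sum (fun x _ =>
          mul_le_of_le_one_left (exp_pos _).le (hqle x))
    linarith
  refine ⟨⟨0, by rintro y ⟨θ, rfl⟩; exact hbound θ⟩, ?_⟩
  intro θs
  set Z : ℝ := ∑ x : Fin T → 𝒳, exp (θs ⬝ᵥ φ x) with hZdef
  have hZ : 0 < Z := hZpos θs
  set p : (Fin T → 𝒳) → ℝ := fun x => exp (θs ⬝ᵥ φ x - Real.log Z) with hpdef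
  have hp_pos : ∀ x, 0 < p x := fun x => exp_pos _
  have hp_eq : ∀ x, p x = exp (θs ⬝ᵥ φ x) / Z := by
    intro x
    simp only [hpdef]
    rw [Real.exp_sub, Real.exp_log hZ]
  have hp_sum : ∑ x : Fin T → 𝒳, p x = 1 := by
    simp only [hp_eq]
    rw [← Finset.sum_div, ← hZdef, div_self hZ.ne']
  constructor
  · -- maximizer ⇒ moment match
    intro hmax
    set E : ι → ℝ := ∑ x : Fin T → 𝒳, p x • φ x with hEdef
    set v : ι → ℝ := muHat - E with hvdef
    set g : ℝ → ℝ := fun t =>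
      (θs ⬝ᵥ muHat + t * (v ⬝ᵥ muHat))
        - Real.log (∑ x : Fin T → 𝒳, exp (θs ⬝ᵥ φ x + t * (v ⬝ᵥ φ x))) with hgdef
    have hg_eq : ∀ t : ℝ, g t = (θs + t • v) ⬝ᵥ muHat
        - Real.log (∑ x : Fin T → 𝒳, exp ((θs + t • v) ⬝ᵥ φ x)) := by
      intro t
      simp [hgdef, add_dotProduct, smul_dotProduct, smul_eq_mul]
    have hmax0 : ∀ t, g t ≤ g 0 := by
      intro t
      rw [hg_eq, hg_eq]
      simpa using hmax (θs + t • v)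
    have hZder : HasDerivAt
        (fun t => ∑ x : Fin T → 𝒳, exp (θs ⬝ᵥ φ x + t * (v ⬝ᵥ φ x)))
        (∑ x : Fin T → 𝒳, exp (θs ⬝ᵥ φ x) * (v ⬝ᵥ φ x)) 0 := by
      apply HasDerivAt.fun_sum
      intro x _
      have h1 : HasDerivAt (fun t : ℝ => θs ⬝ᵥ φ x + t * (v ⬝ᵥ φ x))
          (v ⬝ᵥ φ x) 0 := by
        simpa using ((hasDerivAt_id (0:ℝ)).mul_const (v ⬝ᵥ φ x)).const_add (θs ⬝ᵥ φ x)
      simpa using h1.exp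
    have hZ0 : (∑ x : Fin T → 𝒳, exp (θs ⬝ᵥ φ x + (0:ℝ) * (v ⬝ᵥ φ x))) = Z := by
      simp [hZdef]
    have hlog : HasDerivAt
        (fun t => Real.log (∑ x : Fin T → 𝒳, exp (θs ⬝ᵥ φ x + t * (v ⬝ᵥ φ x))))
        ((∑ x : Fin T → 𝒳, exp (θs ⬝ᵥ φ x) * (v ⬝ᵥ φ x)) / Z) 0 := by
      have h := hZder.log (by rw [hZ0]; exact hZ.ne')
      rwa [hZ0] at h
    have hlin : HasDerivAt (fun t : ℝ => θs ⬝ᵥ muHat + t * (v ⬝ᵥ muHat))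
        (v ⬝ᵥ muHat) 0 := by
      simpa using ((hasDerivAt_id (0:ℝ)).mul_const (v ⬝ᵥ muHat)).const_add (θs ⬝ᵥ muHat)
    have hg' : HasDerivAt g
        (v ⬝ᵥ muHat - (∑ x : Fin T → 𝒳, exp (θs ⬝ᵥ φ x) * (v ⬝ᵥ φ x)) / Z) 0 :=
      hlin.sub hlog
    have hloc : IsLocalMax g 0 := Filter.Eventually.of_forall hmax0
    have hzero := hloc.hasDerivAt_eq_zero hg'
    have hvE : v ⬝ᵥ muHat = v ⬝ᵥ E := by
      have h1 : v ⬝ᵥ muHat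
          = (∑ x : Fin T → 𝒳, exp (θs ⬝ᵥ φ x) * (v ⬝ᵥ φ x)) / Z := by linarith
      rw [h1, hEdef, dot_sum_smul, Finset.sum_div]
      exact Finset.sum_congr rfl fun x _ => by rw [hp_eq]; ring
    have hvv : v ⬝ᵥ v = 0 := by
      have h2 : v ⬝ᵥ (muHat - E) = 0 := by
        rw [dotProduct_sub]
        linarith
      rwa [← hvdef] at h2
    have hv0 : v = 0 := dotProduct_self_eq_zero.mp hvv
    have hME : muHat - E = 0 := hvdef.symm.trans hv0
    exact (sub_eq_zero.mp hME).symm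
  · -- moment match ⇒ maximizer
    intro hE θ
    have key : θ ⬝ᵥ muHat - θs ⬝ᵥ muHat
        ≤ Real.log (∑ x : Fin T → 𝒳, exp (θ ⬝ᵥ φ x)) - Real.log Z := by
      have hJ := jensen_log_exp p (fun x => (θ - θs) ⬝ᵥ φ x)
        (fun x => (hp_pos x).le) hp_sum
      have hL : ∑ x : Fin T → 𝒳, p x * ((θ - θs) ⬝ᵥ φ x)
          = θ ⬝ᵥ muHat - θs ⬝ᵥ muHat := by
        rw [← dot_sum_smul (θ - θs) p φ, hE, sub_dotProduct]
      have hR : Real.log (∑ x : Fin T → 𝒳, p x * exp ((θ - θs) ⬝ᵥ φ x))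
          = Real.log (∑ x : Fin T → 𝒳, exp (θ ⬝ᵥ φ x)) - Real.log Z := by
        have hterm : ∀ x : Fin T → 𝒳,
            p x * exp ((θ - θs) ⬝ᵥ φ x) = exp (θ ⬝ᵥ φ x) / Z := by
          intro x
          rw [hp_eq, sub_dotProduct, div_mul_eq_mul_div, ← Real.exp_add]
          congr 2
          ring
        rw [Finset.sum_congr rfl (fun x _ => hterm x), ← Finset.sum_div,
          Real.log_div (hZpos θ).ne' hZ.ne']
      rw [hL, hR] at hJ
      exact hJ
    linarith
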